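/- In osp_q(1|2), the sCasimir element S = −A₊A₋ + (q^{-1/2} K² − q^{1/2} K⁻²)/(q − q^{-1}) anticommutes with A₊ and with A₋, i.e. S A₊ + A₊ S = 0 and S A₋ + A₋ S = 0. -/

import Mathlib

set_option maxHeartbeats 1000000 in
/-- In `osp_q(1|2)`, the sCasimir `S = −A₊A₋ + (q^{-1/2}K² − q^{1/2}K⁻²)/(q − q⁻¹)`
anticommutes with `A₊` and with `A₋`. -/
theorem sCasimir_anticommutes {A : Type*} [Ring A] [Algebra ℂ A]
    (q s : ℂ) (hq0 : q ≠ 0) (hq1 : q ≠ 1) (hqm1 : q ≠ -1) (hs : s ^ 2 = q)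
    (Ap Am K K' P : A)
    (h1 : K * Ap * K' = s • Ap)
    (h2 : K * Am * K' = s⁻¹ • Am)
    (h3 : Ap * Am + Am * Ap = (s - s⁻¹)⁻¹ • (K ^ 2 - K' ^ 2))
    (h4 : P * Ap = -(Ap * P)) (h5 : P * Am = -(Am * P)) (h6 : P * K = K * P)
    (h7 : K * K' = 1) (h8 : K' * K = 1) (h9 : P ^ 2 = 1) :
    (-(Ap * Am) + (q - q⁻¹)⁻¹ • (s⁻¹ • K ^ 2 - s • K' ^ 2)) * Ap
        + Ap * (-(Ap * Am) + (q - q⁻¹)⁻¹ • (s⁻¹ • K ^ 2 - s • K' ^ 2)) = 0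
    ∧ (-(Ap * Am) + (q - q⁻¹)⁻¹ • (s⁻¹ • K ^ 2 - s • K' ^ 2)) * Am
        + Am * (-(Ap * Am) + (q - q⁻¹)⁻¹ • (s⁻¹ • K ^ 2 - s • K' ^ 2)) = 0 := by
  subst hs
  have hs0 : s ≠ 0 := by intro h; apply hq0; rw [h]; ring
  have hA : s ^ 2 - 1 ≠ 0 := sub_ne_zero.mpr hq1
  have hB : s ^ 2 + 1 ≠ 0 := by
    intro h; exact hqm1 (by linear_combination h)
  have hss : s - s⁻¹ ≠ 0 := by
    intro h
    have h' : s * s = 1 := by field_simp at h; linear_combination h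
    exact hA (by linear_combination h')
  have hqq : s ^ 2 - (s ^ 2)⁻¹ ≠ 0 := by
    intro h
    have h' : s ^ 2 * s ^ 2 = 1 := by field_simp at h; linear_combination h
    have h4 : (s ^ 2 - 1) * (s ^ 2 + 1) = 0 := by linear_combination h'
    rcases mul_eq_zero.mp h4 with h' | h'
    exacts [hA h', hB h']
  have hA' : (-1 : ℂ) + s ^ 2 ≠ 0 := fun h => hA (by linear_combination h)
  have hC : (-1 : ℂ) + s ^ 4 ≠ 0 := fun h => mul_ne_zero hA hB (by linear_combination h)
  have L1 : (s - s⁻¹)⁻¹ = s * (s ^ 2 - 1)⁻¹ := by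
    rw [show s - s⁻¹ = (s ^ 2 - 1) * s⁻¹ by field_simp, mul_inv_rev, inv_inv]
  have L2 : (s ^ 2 - (s ^ 2)⁻¹)⁻¹ = s ^ 2 * ((s ^ 2 - 1)⁻¹ * (s ^ 2 + 1)⁻¹) := by
    rw [show s ^ 2 - (s ^ 2)⁻¹ = (s ^ 2 - 1) * (s ^ 2 + 1) * (s ^ 2)⁻¹ by field_simp; ring,
      mul_inv_rev, inv_inv, mul_inv_rev]
    ring
  rw [L1] at h3
  rw [L2]
  have hKAp : K * Ap = s • (Ap * K) := by
    have := congrArg (· * K) h1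
    simpa [mul_assoc, h8, smul_mul_assoc] using this
  have hKAm : K * Am = s⁻¹ • (Am * K) := by
    have := congrArg (· * K) h2
    simpa [mul_assoc, h8, smul_mul_assoc] using this
  have hK'Ap : K' * Ap = s⁻¹ • (Ap * K') := by
    have := congrArg (fun x => s⁻¹ • (K' * x * K')) hKAp
    simp only [smul_mul_assoc, mul_smul_comm, smul_smul, inv_mul_cancel₀ hs0, one_smul,
      mul_assoc, h7, mul_one] at this
    rw [← mul_assoc] at this
    rw [h8, one_mul] at this
    exact this.symm
  have hK'Am : K' * Am = s • (Am * K') := by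
    have := congrArg (fun x => s • (K' * x * K')) hKAm
    simp only [smul_mul_assoc, mul_smul_comm, smul_smul, mul_inv_cancel₀ hs0, one_smul,
      mul_assoc, h7, mul_one] at this
    rw [← mul_assoc] at this
    rw [h8, one_mul] at this
    exact this.symm
  have e1 : K ^ 2 * Ap = (s ^ 2) • (Ap * K ^ 2) := by
    have h : K * (K * Ap) = (s * s) • (Ap * (K * K)) := by
      rw [hKAp, mul_smul_comm, ← mul_assoc, hKAp, smul_mul_assoc, smul_smul, mul_assoc]
    rw [sq, mul_assoc, h, ← sq s]
  have e2 : K' ^ 2 * Ap = (s ^ 2)⁻¹ • (Ap * K' ^ 2) := by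
    have h : K' * (K' * Ap) = (s⁻¹ * s⁻¹) • (Ap * (K' * K')) := by
      rw [hK'Ap, mul_smul_comm, ← mul_assoc, hK'Ap, smul_mul_assoc, smul_smul, mul_assoc]
    rw [sq, mul_assoc, h, ← mul_inv, ← sq s]
  have e3 : K ^ 2 * Am = (s ^ 2)⁻¹ • (Am * K ^ 2) := by
    have h : K * (K * Am) = (s⁻¹ * s⁻¹) • (Am * (K * K)) := by
      rw [hKAm, mul_smul_comm, ← mul_assoc, hKAm, smul_mul_assoc, smul_smul, mul_assoc]
    rw [sq, mul_assoc, h, ← mul_inv, ← sq s]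
  have e4 : K' ^ 2 * Am = (s ^ 2) • (Am * K' ^ 2) := by
    have h : K' * (K' * Am) = (s * s) • (Am * (K' * K')) := by
      rw [hK'Am, mul_smul_comm, ← mul_assoc, hK'Am, smul_mul_assoc, smul_smul, mul_assoc]
    rw [sq, mul_assoc, h, ← sq s]
  have e5 : Am * Ap = (s * (s ^ 2 - 1)⁻¹) • (K ^ 2 - K' ^ 2) - Ap * Am := by
    rw [← h3]; abel
  have hP : s ^ 5 + (-s ^ 7 - s ^ 9) + s ^ 11 ≠ 0 := by
    have h0 := mul_ne_zero (pow_ne_zero 5 hs0) (mul_ne_zero hA (mul_ne_zero hA hB))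
    exact fun h => h0 (by linear_combination h)
  constructor
  · simp only [add_mul, mul_add, neg_mul, mul_neg, smul_mul_assoc, mul_smul_comm, sub_mul,
      mul_sub, smul_sub, smul_smul, e1, e2, mul_assoc]
    rw [show Ap * (Am * Ap) = Ap * ((s * (s ^ 2 - 1)⁻¹) • (K ^ 2 - K' ^ 2) - Ap * Am) by
      rw [← e5]]
    simp only [mul_sub, mul_smul_comm, smul_sub]
    match_scalars <;> field_simp <;> ring
  · simp only [add_mul, mul_add, neg_mul, mul_neg, smul_mul_assoc, mul_smul_comm, sub_mul,
      mul_sub, smul_sub, smul_smul, mul_assoc]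
    simp only [e3, e4, smul_smul, mul_smul_comm]
    have h' : Ap * Am = (s * (s ^ 2 - 1)⁻¹) • (K ^ 2 - K' ^ 2) - Am * Ap := by
      rw [← h3]; abel
    have e6 : Ap * (Am * Am)
        = (s * (s ^ 2 - 1)⁻¹) • ((K ^ 2 - K' ^ 2) * Am) - Am * (Ap * Am) := by
      calc Ap * (Am * Am) = (Ap * Am) * Am := by rw [mul_assoc]
        _ = ((s * (s ^ 2 - 1)⁻¹) • (K ^ 2 - K' ^ 2) - Am * Ap) * Am := by rw [h']
        _ = (s * (s ^ 2 - 1)⁻¹) • ((K ^ 2 - K' ^ 2) * Am) - Am * (Ap * Am) := by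
            rw [sub_mul, smul_mul_assoc, mul_assoc]
    rw [e6]
    simp only [sub_mul, e3, e4, smul_sub, smul_smul, mul_smul_comm]
    match_scalars
    all_goals
      first
        | ring1
        | (field_simp; ring1)
        | (field_simp; linear_combination (-s ^ 2 : ℂ) * mul_inv_cancel₀ hP)
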